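/- Fix ρ ∈ (−1,1) and φ > 0. Define A_θ = (1+ρ²)/8 + 2/(θ²φ²) and I(θ) = ∫_ℝ exp(−A_θ y² − (ρ/4) y √(y² + θ)) dy/√(2π). Then I(θ) ~ 1/√(2A_θ) as θ → 0⁺, i.e. lim_{θ→0⁺} I(θ)·√(2A_θ) = 1. -/

import Mathlib

open MeasureTheory Filter Real Set

private lemma sqrt_add_le' {a b : ℝ} (ha : 0 ≤ a) (hb : 0 ≤ b) :
    Real.sqrt (a + b) ≤ Real.sqrt a + Real.sqrt b := by
  rw [show Real.sqrt a + Real.sqrt b = Real.sqrt ((Real.sqrt a + Real.sqrt b)^2) from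
    (Real.sqrt_sq (by positivity)).symm]
  apply Real.sqrt_le_sqrt
  have h1 : Real.sqrt a ^ 2 = a := Real.sq_sqrt ha
  have h2 : Real.sqrt b ^ 2 = b := Real.sq_sqrt hb
  nlinarith [Real.sqrt_nonneg a, Real.sqrt_nonneg b]

theorem laplace_asymptotics_I
    (ρ φ : ℝ) (hρ : ρ ∈ Set.Ioo (-1:ℝ) 1) (hφ : 0 < φ)
    (A : ℝ → ℝ) (hA : ∀ θ, A θ = (1 + ρ^2) / 8 + 2 / (θ^2 * φ^2))
    (I : ℝ → ℝ)
    (hI : ∀ θ, I θ = ∫ y : ℝ,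
        Real.exp (-(A θ) * y^2 - (ρ / 4) * y * Real.sqrt (y^2 + θ)) / Real.sqrt (2 * Real.pi)) :
    Filter.Tendsto (fun θ => I θ * Real.sqrt (2 * A θ))
      (nhdsWithin 0 (Set.Ioi 0)) (nhds 1) := by
  obtain ⟨hρ1, hρ2⟩ := hρ
  have hρabs : |ρ| ≤ 1 := abs_le.2 ⟨hρ1.le, hρ2.le⟩
  have hApos : ∀ θ : ℝ, 0 < θ → 0 < A θ := by
    intro θ hθ; rw [hA]; positivity
  set h : ℝ → ℝ → ℝ := fun θ x =>
    (ρ/4) * (x / Real.sqrt (A θ)) * Real.sqrt ((x / Real.sqrt (A θ))^2 + θ) with hh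
  set G : ℝ → ℝ → ℝ := fun θ x => Real.exp (-x^2 - h θ x) with hG
  -- bound on the perturbation h
  have hbound : ∀ θ : ℝ, 0 < θ → ∀ x : ℝ,
      |h θ x| ≤ |ρ|/4 * (x^2 * θ^2 * φ^2 / 2 + |x| * (θ * Real.sqrt θ) * φ / Real.sqrt 2) := by
    intro θ hθ x
    have hAθ := hApos θ hθ
    have hsA : 0 < Real.sqrt (A θ) := Real.sqrt_pos.2 hAθ
    have hinv : (Real.sqrt (A θ))⁻¹ ≤ θ * φ / Real.sqrt 2 := by
      have hge : Real.sqrt 2 / (θ * φ) ≤ Real.sqrt (A θ) := by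
        rw [Real.le_sqrt (by positivity) hAθ.le]
        rw [hA, div_pow, Real.sq_sqrt (by norm_num : (0:ℝ) ≤ 2)]
        have he : 2 / (θ * φ)^2 = 2 / (θ^2 * φ^2) := by ring_nf
        rw [he]
        nlinarith [sq_nonneg ρ]
      calc (Real.sqrt (A θ))⁻¹ ≤ (Real.sqrt 2 / (θ * φ))⁻¹ :=
            inv_anti₀ (by positivity) hge
        _ = θ * φ / Real.sqrt 2 := by rw [inv_div]
    have habs : |h θ x| = |ρ|/4 * (|x| * (Real.sqrt (A θ))⁻¹) *
        Real.sqrt ((x / Real.sqrt (A θ))^2 + θ) := by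
      rw [hh]
      simp only [abs_mul, abs_div, abs_of_nonneg hsA.le,
        abs_of_nonneg (Real.sqrt_nonneg ((x / Real.sqrt (A θ))^2 + θ))]
      rw [show |(4:ℝ)| = 4 by norm_num]
      ring
    have hsqrt : Real.sqrt ((x / Real.sqrt (A θ))^2 + θ)
        ≤ |x| * (Real.sqrt (A θ))⁻¹ + Real.sqrt θ := by
      calc Real.sqrt ((x / Real.sqrt (A θ))^2 + θ)
          ≤ Real.sqrt ((x / Real.sqrt (A θ))^2) + Real.sqrt θ :=
            sqrt_add_le' (sq_nonneg _) hθ.le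
        _ = |x / Real.sqrt (A θ)| + Real.sqrt θ := by rw [Real.sqrt_sq_eq_abs]
        _ = |x| * (Real.sqrt (A θ))⁻¹ + Real.sqrt θ := by
            rw [abs_div, abs_of_nonneg hsA.le, div_eq_mul_inv]
    have h2 : Real.sqrt ((x / Real.sqrt (A θ))^2 + θ)
        ≤ |x| * (θ * φ / Real.sqrt 2) + Real.sqrt θ := by
      refine hsqrt.trans ?_
      have := mul_le_mul_of_nonneg_left hinv (abs_nonneg x)
      linarith
    have key : |ρ|/4 * (|x| * (Real.sqrt (A θ))⁻¹) * Real.sqrt ((x / Real.sqrt (A θ))^2 + θ)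
        ≤ |ρ|/4 * (|x| * (θ * φ / Real.sqrt 2)) * (|x| * (θ * φ / Real.sqrt 2) + Real.sqrt θ) := by
      apply mul_le_mul _ h2 (Real.sqrt_nonneg _) (by positivity)
      have := mul_le_mul_of_nonneg_left hinv (abs_nonneg x)
      have := mul_le_mul_of_nonneg_left this (by positivity : (0:ℝ) ≤ |ρ|/4)
      linarith
    rw [habs]
    refine key.trans (le_of_eq ?_)
    have hsq2 : (θ * φ / Real.sqrt 2) * (θ * φ / Real.sqrt 2) = θ^2 * φ^2 / 2 := by
      rw [div_mul_div_comm, Real.mul_self_sqrt (by norm_num : (0:ℝ) ≤ 2)]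
      ring
    calc |ρ|/4 * (|x| * (θ * φ / Real.sqrt 2)) * (|x| * (θ * φ / Real.sqrt 2) + Real.sqrt θ)
        = |ρ|/4 * ((|x| * |x|) * ((θ * φ / Real.sqrt 2) * (θ * φ / Real.sqrt 2))
            + |x| * Real.sqrt θ * (θ * φ / Real.sqrt 2)) := by ring
      _ = |ρ|/4 * (x^2 * θ^2 * φ^2 / 2 + |x| * (θ * Real.sqrt θ) * φ / Real.sqrt 2) := by
          rw [abs_mul_abs_self, hsq2]; ring
  -- rewriting I θ * √(2 A θ) via the substitution y = x / √(A θ)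
  have hEq : ∀ θ : ℝ, θ ∈ Set.Ioi (0:ℝ) →
      I θ * Real.sqrt (2 * A θ) = (Real.sqrt π)⁻¹ * ∫ x : ℝ, G θ x := by
    intro θ hθ
    have hθ' : (0:ℝ) < θ := hθ
    have hAθ := hApos θ hθ'
    have hsA : 0 < Real.sqrt (A θ) := Real.sqrt_pos.2 hAθ
    have hπ : 0 < Real.sqrt π := Real.sqrt_pos.2 Real.pi_pos
    have hs2 : (0:ℝ) < Real.sqrt 2 := by positivity
    have hsub : (∫ x : ℝ, G θ x) = Real.sqrt (A θ) *
        ∫ y : ℝ, Real.exp (-(A θ) * y^2 - (ρ/4) * y * Real.sqrt (y^2 + θ)) := by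
      have hcv := MeasureTheory.Measure.integral_comp_div
        (fun y : ℝ => Real.exp (-(A θ) * y^2 - (ρ/4) * y * Real.sqrt (y^2 + θ)))
        (Real.sqrt (A θ))
      rw [abs_of_pos hsA, smul_eq_mul] at hcv
      rw [← hcv]
      congr 1
      ext x
      rw [hG]
      simp only [hh]
      congr 2
      rw [div_pow, Real.sq_sqrt hAθ.le]
      field_simp
    rw [hI θ, integral_div, hsub]
    rw [Real.sqrt_mul (by norm_num : (0:ℝ) ≤ 2), Real.sqrt_mul (by norm_num : (0:ℝ) ≤ 2)]
    field_simp
    congr 1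
    ext y
    ring_nf
  -- dominated convergence
  have hgauss : (∫ x : ℝ, Real.exp (-x^2)) = Real.sqrt π := by
    have := integral_gaussian 1
    simpa using this
  have hlim : Tendsto (fun θ => ∫ x : ℝ, G θ x) (nhdsWithin 0 (Set.Ioi 0))
      (nhds (Real.sqrt π)) := by
    rw [← hgauss]
    apply MeasureTheory.tendsto_integral_filter_of_dominated_convergence
      (bound := fun x => Real.exp 1 * Real.exp (-(4⁻¹) * x^2))
    · apply Eventually.of_forall
      intro θ
      apply Continuous.aestronglyMeasurable
      apply Real.continuous_exp.comp
      fun_prop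
    · have hδ : Set.Ioo (0:ℝ) (min 1 (1/φ)) ∈ nhdsWithin (0:ℝ) (Set.Ioi 0) :=
        Ioo_mem_nhdsGT_of_mem ⟨le_refl _, by positivity⟩
      filter_upwards [hδ] with θ hθ
      apply ae_of_all
      intro x
      obtain ⟨hθ0, hθδ⟩ := hθ
      have hθ1 : θ ≤ 1 := le_of_lt (lt_of_lt_of_le hθδ (min_le_left _ _))
      have hθφ : θ * φ ≤ 1 := by
        have h3 : θ < 1/φ := lt_of_lt_of_le hθδ (min_le_right _ _)
        calc θ * φ ≤ (1/φ) * φ := by nlinarith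
          _ = 1 := by field_simp
      have hsqθ : Real.sqrt θ ≤ 1 := Real.sqrt_le_one.mpr hθ1
      have hs2ge : 1 ≤ Real.sqrt 2 := by
        rw [show (1:ℝ) = Real.sqrt 1 from (Real.sqrt_one).symm]
        exact Real.sqrt_le_sqrt (by norm_num)
      have hxabs : |x| ≤ x^2/2 + 1/2 := by nlinarith [sq_abs x, sq_nonneg (|x| - 1)]
      have hb := hbound θ hθ0 x
      have hθφ2 : θ^2 * φ^2 ≤ 1 := by nlinarith [mul_nonneg hθ0.le hφ.le, hθφ]
      have hT1 : x^2 * θ^2 * φ^2 / 2 ≤ x^2 / 2 := by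
        nlinarith [mul_le_mul_of_nonneg_left hθφ2 (sq_nonneg x)]
      have hT2 : |x| * (θ * Real.sqrt θ) * φ / Real.sqrt 2 ≤ |x| := by
        have h1 : |x| * (θ * Real.sqrt θ) * φ ≤ |x| := by
          have hp : θ * φ * Real.sqrt θ ≤ 1 * 1 :=
            mul_le_mul hθφ hsqθ (Real.sqrt_nonneg θ) zero_le_one
          have h1' : |x| * (θ * φ * Real.sqrt θ) ≤ |x| * 1 :=
            mul_le_mul_of_nonneg_left (by linarith) (abs_nonneg x)
          have he : |x| * (θ * Real.sqrt θ) * φ = |x| * (θ * φ * Real.sqrt θ) := by ring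
          rw [he]; linarith
        exact le_trans (div_le_self (by positivity) hs2ge) h1
      have hT1n : (0:ℝ) ≤ x^2 * θ^2 * φ^2 / 2 := by positivity
      have hT2n : (0:ℝ) ≤ |x| * (θ * Real.sqrt θ) * φ / Real.sqrt 2 := by positivity
      have habs2 : |h θ x| ≤ x^2/8 + |x|/4 := by
        calc |h θ x| ≤ |ρ|/4 * (x^2 * θ^2 * φ^2 / 2 + |x| * (θ * Real.sqrt θ) * φ / Real.sqrt 2) :=
              hb
          _ ≤ 1/4 * (x^2/2 + |x|) := by nlinarith [abs_nonneg ρ]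
          _ = x^2/8 + |x|/4 := by ring
      rw [hG]
      simp only [Real.norm_eq_abs, abs_of_pos (Real.exp_pos _)]
      rw [← Real.exp_add]
      apply Real.exp_le_exp.2
      have := neg_abs_le (h θ x)
      linarith
    · exact (integrable_exp_neg_mul_sq (by norm_num : (0:ℝ) < 4⁻¹)).const_mul _
    · apply ae_of_all
      intro x
      have hh0 : Tendsto (fun θ => h θ x) (nhdsWithin 0 (Set.Ioi 0)) (nhds 0) := by
        have hfθ : ∀ᶠ θ in nhdsWithin (0:ℝ) (Set.Ioi 0), ‖h θ x‖ ≤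
            |ρ|/4 * (x^2 * θ^2 * φ^2 / 2 + |x| * (θ * Real.sqrt θ) * φ / Real.sqrt 2) := by
          filter_upwards [self_mem_nhdsWithin] with θ hθ
          simpa [Real.norm_eq_abs] using hbound θ hθ x
        have hc : Continuous fun θ : ℝ =>
            |ρ|/4 * (x^2 * θ^2 * φ^2 / 2 + |x| * (θ * Real.sqrt θ) * φ / Real.sqrt 2) := by
          fun_prop
        have hg : Tendsto (fun θ : ℝ =>
            |ρ|/4 * (x^2 * θ^2 * φ^2 / 2 + |x| * (θ * Real.sqrt θ) * φ / Real.sqrt 2))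
            (nhdsWithin 0 (Set.Ioi 0)) (nhds 0) := by
          refine (hc.tendsto' 0 0 (by norm_num)).mono_left nhdsWithin_le_nhds
        exact squeeze_zero_norm' hfθ hg
      have harg : Tendsto (fun θ => -x^2 - h θ x) (nhdsWithin 0 (Set.Ioi 0)) (nhds (-x^2)) := by
        have := (tendsto_const_nhds (x := -x^2)
          (f := nhdsWithin (0:ℝ) (Set.Ioi 0))).sub hh0
        simpa using this
      exact (Real.continuous_exp.tendsto _).comp harg
  -- conclusion
  have hfinal : Tendsto (fun θ => (Real.sqrt π)⁻¹ * ∫ x : ℝ, G θ x)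
      (nhdsWithin 0 (Set.Ioi 0)) (nhds 1) := by
    have := hlim.const_mul (Real.sqrt π)⁻¹
    rwa [inv_mul_cancel₀ (ne_of_gt (Real.sqrt_pos.2 Real.pi_pos))] at this
  apply hfinal.congr'
  filter_upwards [self_mem_nhdsWithin] with θ hθ
  exact (hEq θ hθ).symm
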